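/- (Factorization of the twisted Selberg zeta function Z_{ρ_m}(σ_k, s).) Let m ∈ ℕ and k ∈ ℤ, and suppose that for every i ∈ I the matrix A i ∈ Matrix (Fin (m+1)) (Fin (m+1)) ℂ is similar to the diagonal matrix whose diagonal entries are exp((m/2 − l)·(ℓ i + i·θ i)) for l = 0, 1, …, m (this is ρ_m(γ_i) for the m-th symmetric power ρ_m of the standard representation of SL(2,ℂ)). Then for every s ∈ ℂ with Re(s) > 2 + m/2, the family over (i, p, q) ∈ I × ℕ × ℕ given by det( 1 − exp(i(k/2)·θ i)·exp(−p(ℓ i + i·θ i))·exp(−q(ℓ i − i·θ i))·exp(−s·ℓ i) · (A i) ) is multipliable, and its product equals ∏_{l=0}^{m} Z(m − 2l + k, s − m/2 + l). -/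

import Mathlib

/-- `R(σ_k, s) = ∏_{i ∈ I} (1 − e^{i(k/2)θ_i} e^{−s ℓ_i})`. -/
noncomputable def Rz {I : Type*} (ℓ θ : I → ℝ) (k : ℤ) (s : ℂ) : ℂ :=
  ∏' i : I, (1 - Complex.exp (Complex.I * ((k : ℂ) / 2) * (θ i : ℂ))
    * Complex.exp (-s * (ℓ i : ℂ)))

/-- Selberg zeta function
`Z(σ_k, s) = ∏_{i ∈ I} ∏_{p,q ≥ 0} (1 − e^{i(k/2)θ_i} e^{−p(ℓ_i+iθ_i)} e^{−q(ℓ_i−iθ_i)} e^{−s ℓ_i})`. -/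
noncomputable def Zs {I : Type*} (ℓ θ : I → ℝ) (k : ℤ) (s : ℂ) : ℂ :=
  ∏' x : I × ℕ × ℕ,
    (1 - Complex.exp (Complex.I * ((k : ℂ) / 2) * (θ x.1 : ℂ))
       * Complex.exp (-(x.2.1 : ℂ) * ((ℓ x.1 : ℂ) + Complex.I * (θ x.1 : ℂ)))
       * Complex.exp (-(x.2.2 : ℂ) * ((ℓ x.1 : ℂ) - Complex.I * (θ x.1 : ℂ)))
       * Complex.exp (-s * (ℓ x.1 : ℂ)))

open Complex Real Filter

/-- Multipliability of `1 + f` from summability of norms. -/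
lemma mult_one_add {β : Type*} {f : β → ℂ} (h : Summable fun b => ‖f b‖)
    (h1 : ∀ b, ‖f b‖ < 1) : Multipliable fun b => 1 + f b := by
  exact multipliable_one_add_of_summable h

lemma summable_exp_aux {I : Type*} (ℓ : I → ℝ) (hℓ : ∀ i, 0 < ℓ i) {δ : ℝ}
    (hsum : Summable fun i => Real.exp (-δ * ℓ i)) {σ : ℝ} (hδσ : δ < σ) :
    Summable fun x : I × ℕ × ℕ => Real.exp (-(((x.2.1 : ℝ) + (x.2.2 : ℝ)) + σ) * ℓ x.1) := by
  have hKs : Summable fun pq : ℕ × ℕ => Real.exp (-(pq.1 : ℝ)) * Real.exp (-(pq.2 : ℝ)) := by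
    have hg : Summable fun p : ℕ => Real.exp (-(p : ℝ)) := by
      have := summable_geometric_of_lt_one (r := Real.exp (-1)) (Real.exp_nonneg _)
        (Real.exp_lt_one_iff.mpr (by norm_num))
      apply this.congr
      intro p
      rw [← Real.exp_nat_mul]
      congr 1; ring
    exact hg.mul_of_nonneg hg (fun _ => Real.exp_nonneg _) (fun _ => Real.exp_nonneg _)
  set K : ℝ := ∑' pq : ℕ × ℕ, Real.exp (-(pq.1 : ℝ)) * Real.exp (-(pq.2 : ℝ)) with hK
  have hfin : {i : I | ℓ i < 1}.Finite := by
    have hev := hsum.tendsto_cofinite_zero.eventually_lt_const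
      (show (0:ℝ) < Real.exp (-(max δ 0)) from Real.exp_pos _)
    rw [Filter.eventually_cofinite] at hev
    apply hev.subset
    intro i hi
    simp only [Set.mem_setOf_eq, not_lt]
    apply Real.exp_le_exp.mpr
    have h1 : -δ * ℓ i ≥ -(max δ 0) * ℓ i :=
      mul_le_mul_of_nonneg_right (neg_le_neg (le_max_left _ _)) (hℓ i).le
    refine le_trans ?_ h1
    have : max δ 0 * ℓ i ≤ max δ 0 * 1 :=
      mul_le_mul_of_nonneg_left hi.le (le_max_right _ _)
    nlinarith
  rw [summable_prod_of_nonneg (fun _ => Real.exp_nonneg _)]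
  constructor
  · intro i
    have hr0 : (0:ℝ) ≤ Real.exp (-ℓ i) := Real.exp_nonneg _
    have hr1 : Real.exp (-ℓ i) < 1 := Real.exp_lt_one_iff.mpr (by linarith [hℓ i])
    have hg : Summable fun p : ℕ => Real.exp (-ℓ i) ^ p := summable_geometric_of_lt_one hr0 hr1
    have : Summable fun pq : ℕ × ℕ => Real.exp (-ℓ i) ^ pq.1 * Real.exp (-ℓ i) ^ pq.2 :=
      hg.mul_of_nonneg hg (fun _ => pow_nonneg hr0 _) (fun _ => pow_nonneg hr0 _)
    apply ((this.mul_left (Real.exp (-σ * ℓ i)))).congr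
    intro pq
    rw [← Real.exp_nat_mul, ← Real.exp_nat_mul, ← Real.exp_add, ← Real.exp_add]
    congr 1; ring
  · rw [← hfin.summable_compl_iff]
    refine Summable.of_nonneg_of_le (fun _ => tsum_nonneg fun _ => Real.exp_nonneg _)
      ?_ ((hsum.mul_right K).subtype _)
    · intro ⟨i, hi⟩
      simp only [Set.mem_compl_iff, Set.mem_setOf_eq, not_lt] at hi
      have hterm : ∀ pq : ℕ × ℕ, Real.exp (-(((pq.1 : ℝ) + (pq.2 : ℝ)) + σ) * ℓ i)
          ≤ Real.exp (-δ * ℓ i) * (Real.exp (-(pq.1 : ℝ)) * Real.exp (-(pq.2 : ℝ))) := by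
        intro pq
        rw [← Real.exp_add, ← Real.exp_add]
        apply Real.exp_le_exp.mpr
        have h1 : (pq.1 : ℝ) * 1 ≤ (pq.1 : ℝ) * ℓ i :=
          mul_le_mul_of_nonneg_left hi (Nat.cast_nonneg _)
        have h2 : (pq.2 : ℝ) * 1 ≤ (pq.2 : ℝ) * ℓ i :=
          mul_le_mul_of_nonneg_left hi (Nat.cast_nonneg _)
        have h3 : δ * ℓ i ≤ σ * ℓ i := mul_le_mul_of_nonneg_right hδσ.le (hℓ i).le
        nlinarith
      calc ∑' pq : ℕ × ℕ, Real.exp (-(((pq.1 : ℝ) + (pq.2 : ℝ)) + σ) * ℓ i)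
          ≤ ∑' pq : ℕ × ℕ, Real.exp (-δ * ℓ i) *
              (Real.exp (-(pq.1 : ℝ)) * Real.exp (-(pq.2 : ℝ))) := by
            apply Summable.tsum_le_tsum hterm ?_ (hKs.mul_left _)
            · exact Summable.of_nonneg_of_le (fun _ => Real.exp_nonneg _) hterm (hKs.mul_left _)
        _ = Real.exp (-δ * ℓ i) * K := by rw [Summable.tsum_mul_left _ hKs]

lemma norm_term (kk : ℤ) (li ti : ℝ) (p q : ℕ) (s' : ℂ) :
    ‖Complex.exp (Complex.I * ((kk : ℂ) / 2) * (ti : ℂ))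
      * Complex.exp (-(p : ℂ) * ((li : ℂ) + Complex.I * (ti : ℂ)))
      * Complex.exp (-(q : ℂ) * ((li : ℂ) - Complex.I * (ti : ℂ)))
      * Complex.exp (-s' * (li : ℂ))‖
    = Real.exp (-(((p : ℝ) + (q : ℝ)) + s'.re) * li) := by
  rw [show Complex.I * ((kk : ℂ) / 2) * (ti : ℂ)
        = (((kk : ℝ) / 2 * ti : ℝ) : ℂ) * Complex.I by push_cast; ring,
      show (-(p : ℂ) * ((li : ℂ) + Complex.I * (ti : ℂ)))
        = ((-(p : ℝ) * li : ℝ) : ℂ) + ((-(p : ℝ) * ti : ℝ) : ℂ) * Complex.I by push_cast; ring,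
      show (-(q : ℂ) * ((li : ℂ) - Complex.I * (ti : ℂ)))
        = ((-(q : ℝ) * li : ℝ) : ℂ) + (((q : ℝ) * ti : ℝ) : ℂ) * Complex.I by push_cast; ring]
  simp only [norm_mul, Complex.norm_exp, Complex.add_re,
    Complex.ofReal_re, Complex.mul_I_re, Complex.ofReal_im, Complex.mul_re,
    Complex.I_re, Complex.I_im, neg_zero, mul_zero, zero_mul, sub_zero, add_zero, neg_re,
    neg_im]
  rw [← Real.exp_add, ← Real.exp_add, ← Real.exp_add]
  congr 1
  ring

lemma tprod_finset_prod {β L : Type*} {g : L → β → ℂ} (s : Finset L)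
    (h : ∀ l ∈ s, Multipliable (g l)) :
    Multipliable (fun x => ∏ l ∈ s, g l x) ∧
      (∏' x, ∏ l ∈ s, g l x) = ∏ l ∈ s, ∏' x, g l x := by
  classical
  induction s using Finset.induction_on with
  | empty =>
    refine ⟨?_, ?_⟩
    · simpa using (multipliable_one (β := β) (α := ℂ))
    · simpa using (tprod_one (β := β) (α := ℂ))
  | @insert a t ha ih =>
    have h1 := h a (Finset.mem_insert_self a t)
    obtain ⟨hm, he⟩ := ih fun l hl => h l (Finset.mem_insert_of_mem hl)
    have key : ∀ x, ∏ l ∈ insert a t, g l x = g a x * ∏ l ∈ t, g l x :=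
      fun x => Finset.prod_insert ha
    constructor
    · exact (multipliable_congr key).mpr (h1.mul hm)
    · rw [tprod_congr key, Multipliable.tprod_mul h1 hm, he, Finset.prod_insert ha]

/-- factorization of the twisted Selberg zeta function `Z_{ρ_m}(σ_k, s)`. -/
theorem statement17 {I : Type*} [Countable I] (ℓ θ : I → ℝ)
    (hℓ : ∀ i, 0 < ℓ i) (δ : ℝ) (hδ : δ < 2)
    (hsum : Summable fun i => Real.exp (-δ * ℓ i))
    (m : ℕ) (k : ℤ) (A : I → Matrix (Fin (m + 1)) (Fin (m + 1)) ℂ)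
    (hA : ∀ i : I, ∃ P : Matrix (Fin (m + 1)) (Fin (m + 1)) ℂ, IsUnit P.det ∧
      A i = P * Matrix.diagonal (fun l : Fin (m + 1) =>
        Complex.exp (((m : ℂ) / 2 - ((l : ℕ) : ℂ)) * ((ℓ i : ℂ) + Complex.I * (θ i : ℂ)))) * P⁻¹)
    (s : ℂ) (hs : 2 + (m : ℝ) / 2 < s.re) :
    (Multipliable fun x : I × ℕ × ℕ =>
      Matrix.det (1 -
        (Complex.exp (Complex.I * ((k : ℂ) / 2) * (θ x.1 : ℂ))
          * Complex.exp (-(x.2.1 : ℂ) * ((ℓ x.1 : ℂ) + Complex.I * (θ x.1 : ℂ)))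
          * Complex.exp (-(x.2.2 : ℂ) * ((ℓ x.1 : ℂ) - Complex.I * (θ x.1 : ℂ)))
          * Complex.exp (-s * (ℓ x.1 : ℂ))) • A x.1)) ∧
    (∏' x : I × ℕ × ℕ,
      Matrix.det (1 -
        (Complex.exp (Complex.I * ((k : ℂ) / 2) * (θ x.1 : ℂ))
          * Complex.exp (-(x.2.1 : ℂ) * ((ℓ x.1 : ℂ) + Complex.I * (θ x.1 : ℂ)))
          * Complex.exp (-(x.2.2 : ℂ) * ((ℓ x.1 : ℂ) - Complex.I * (θ x.1 : ℂ)))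
          * Complex.exp (-s * (ℓ x.1 : ℂ))) • A x.1)) =
      ∏ l ∈ Finset.range (m + 1),
        Zs ℓ θ ((m : ℤ) - 2 * (l : ℤ) + k) (s - (m : ℂ) / 2 + (l : ℂ)) := by
  classical
  set c : I × ℕ × ℕ → ℂ := fun x =>
    Complex.exp (Complex.I * ((k : ℂ) / 2) * (θ x.1 : ℂ))
      * Complex.exp (-(x.2.1 : ℂ) * ((ℓ x.1 : ℂ) + Complex.I * (θ x.1 : ℂ)))
      * Complex.exp (-(x.2.2 : ℂ) * ((ℓ x.1 : ℂ) - Complex.I * (θ x.1 : ℂ)))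
      * Complex.exp (-s * (ℓ x.1 : ℂ)) with hc
  set z : ℕ → I × ℕ × ℕ → ℂ := fun l x =>
    1 - Complex.exp (Complex.I * ((((m : ℤ) - 2 * (l : ℤ) + k : ℤ) : ℂ) / 2) * (θ x.1 : ℂ))
       * Complex.exp (-(x.2.1 : ℂ) * ((ℓ x.1 : ℂ) + Complex.I * (θ x.1 : ℂ)))
       * Complex.exp (-(x.2.2 : ℂ) * ((ℓ x.1 : ℂ) - Complex.I * (θ x.1 : ℂ)))
       * Complex.exp (-(s - (m : ℂ) / 2 + (l : ℂ)) * (ℓ x.1 : ℂ)) with hz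
  have hZs : ∀ l : ℕ,
      Zs ℓ θ ((m : ℤ) - 2 * (l : ℤ) + k) (s - (m : ℂ) / 2 + (l : ℂ)) = ∏' x, z l x :=
    fun l => rfl
  -- pointwise determinant identity
  have hdet : ∀ x : I × ℕ × ℕ,
      Matrix.det (1 - c x • A x.1) = ∏ l ∈ Finset.range (m + 1), z l x := by
    intro x
    obtain ⟨P, hP, hAi⟩ := hA x.1
    have hPu : IsUnit P := (Matrix.isUnit_iff_isUnit_det P).mpr hP
    set D : Matrix (Fin (m + 1)) (Fin (m + 1)) ℂ := Matrix.diagonal (fun l : Fin (m + 1) =>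
      Complex.exp (((m : ℂ) / 2 - ((l : ℕ) : ℂ)) * ((ℓ x.1 : ℂ) + Complex.I * (θ x.1 : ℂ))))
      with hD
    have h1 : 1 - c x • A x.1 = P * (1 - c x • D) * P⁻¹ := by
      rw [hAi, Matrix.mul_sub, Matrix.mul_one, Matrix.sub_mul,
        Matrix.mul_nonsing_inv _ hP, Matrix.mul_smul, Matrix.smul_mul]
    rw [h1, Matrix.det_conj hPu]
    have h2 : (1 : Matrix (Fin (m + 1)) (Fin (m + 1)) ℂ) - c x • D
        = Matrix.diagonal (fun l : Fin (m + 1) => 1 - c x *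
          Complex.exp (((m : ℂ) / 2 - ((l : ℕ) : ℂ)) * ((ℓ x.1 : ℂ) + Complex.I * (θ x.1 : ℂ)))) := by
      rw [hD, ← Matrix.diagonal_one, ← Matrix.diagonal_smul, Matrix.diagonal_sub]
      congr 1
    rw [h2, Matrix.det_diagonal]
    rw [Fin.prod_univ_eq_prod_range (fun n : ℕ => 1 - c x *
      Complex.exp (((m : ℂ) / 2 - (n : ℂ)) * ((ℓ x.1 : ℂ) + Complex.I * (θ x.1 : ℂ)))) (m + 1)]
    apply Finset.prod_congr rfl
    intro l hl
    rw [hz, hc]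
    simp only
    rw [sub_right_inj]
    rw [mul_assoc, mul_assoc, mul_assoc, mul_assoc, mul_assoc,
      ← Complex.exp_add, ← Complex.exp_add, ← Complex.exp_add, ← Complex.exp_add,
      ← Complex.exp_add, ← Complex.exp_add, ← Complex.exp_add]
    congr 1
    push_cast
    ring
  -- multipliability of each z l
  have hmul : ∀ l ∈ Finset.range (m + 1), Multipliable (z l) := by
    intro l hl
    rw [Finset.mem_range, Nat.lt_succ_iff] at hl
    set σ' : ℝ := s.re - (m : ℝ) / 2 + (l : ℝ) with hσ'
    have hre : (s - (m : ℂ) / 2 + (l : ℂ)).re = σ' := by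
      simp [hσ', Complex.sub_re, Complex.add_re, Complex.div_ofNat_re]
    have hδσ : δ < σ' := by
      have : (0 : ℝ) ≤ (l : ℝ) := Nat.cast_nonneg _
      simp only [hσ']
      linarith
    have hσ0 : 0 < σ' := by
      have : (0 : ℝ) ≤ (l : ℝ) := Nat.cast_nonneg _
      simp only [hσ']
      linarith
    have hnorm : ∀ x : I × ℕ × ℕ,
        ‖-(Complex.exp (Complex.I * ((((m : ℤ) - 2 * (l : ℤ) + k : ℤ) : ℂ) / 2) * (θ x.1 : ℂ))
          * Complex.exp (-(x.2.1 : ℂ) * ((ℓ x.1 : ℂ) + Complex.I * (θ x.1 : ℂ)))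
          * Complex.exp (-(x.2.2 : ℂ) * ((ℓ x.1 : ℂ) - Complex.I * (θ x.1 : ℂ)))
          * Complex.exp (-(s - (m : ℂ) / 2 + (l : ℂ)) * (ℓ x.1 : ℂ)))‖
        = Real.exp (-(((x.2.1 : ℝ) + (x.2.2 : ℝ)) + σ') * ℓ x.1) := by
      intro x
      rw [norm_neg, norm_term, hre]
    have hmm : Multipliable fun x : I × ℕ × ℕ =>
        1 + -(Complex.exp (Complex.I * ((((m : ℤ) - 2 * (l : ℤ) + k : ℤ) : ℂ) / 2) * (θ x.1 : ℂ))
          * Complex.exp (-(x.2.1 : ℂ) * ((ℓ x.1 : ℂ) + Complex.I * (θ x.1 : ℂ)))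
          * Complex.exp (-(x.2.2 : ℂ) * ((ℓ x.1 : ℂ) - Complex.I * (θ x.1 : ℂ)))
          * Complex.exp (-(s - (m : ℂ) / 2 + (l : ℂ)) * (ℓ x.1 : ℂ))) := by
      apply mult_one_add
      · exact ((summable_exp_aux ℓ hℓ hsum hδσ).congr (fun x => (hnorm x).symm))
      · intro x
        rw [hnorm x]
        apply Real.exp_lt_one_iff.mpr
        have h1 : 0 < (((x.2.1 : ℝ) + (x.2.2 : ℝ)) + σ') := by positivity
        have := hℓ x.1
        nlinarith
    apply (multipliable_congr (g := z l) ?_).mp hmm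
    intro x
    rw [hz]
    ring
  obtain ⟨hM, hE⟩ := tprod_finset_prod (Finset.range (m + 1)) hmul
  constructor
  · exact (multipliable_congr hdet).mpr hM
  · rw [tprod_congr hdet, hE]
    exact (Finset.prod_congr rfl fun l _ => (hZs l).symm)
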